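/- Let M and M′ be 4×4 real matrices all of whose off-diagonal entries are nonzero. Suppose M_{ij}·M_{ji} = M′_{ij}·M′_{ji} for all i ≠ j, and that M₁₂M₂₃M₃₁ = M′₁₂M′₂₃M′₃₁, M₁₂M₂₄M₄₁ = M′₁₂M′₂₄M′₄₁, and M₁₃M₃₄M₄₁ = M′₁₃M′₃₄M′₄₁. Then all cyclic invariants of M and M′ agree: for every k ∈ {2, 3, 4} and every tuple of k pairwise distinct indices i₁, …, i_k in {1, 2, 3, 4}, one has M_{i₁i₂}M_{i₂i₃}⋯M_{i_ki₁} = M′_{i₁i₂}M′_{i₂i₃}⋯M′_{i_ki₁}. -/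

import Mathlib

private lemma pm2 {a b a' b' : ℝ} (h1 : a = a') (h2 : b = b') : a * b = a' * b' := by
  rw [h1, h2]

private lemma pm3 {a b c a' b' c' : ℝ} (h1 : a = a') (h2 : b = b') (h3 : c = c') :
    a * b * c = a' * b' * c' := by rw [h1, h2, h3]

private lemma cancel3 {a b c d : ℝ} (hc : c ≠ 0) (h1 : a * c = b * d) (h2 : c = d) : a = b := by
  rw [← h2] at h1
  exact mul_right_cancel₀ hc h1

private lemma cyc2 (M M' : Matrix (Fin 4) (Fin 4) ℝ)
    (p01 : M 0 1 * M 1 0 = M' 0 1 * M' 1 0) (p02 : M 0 2 * M 2 0 = M' 0 2 * M' 2 0)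
    (p03 : M 0 3 * M 3 0 = M' 0 3 * M' 3 0) (p12 : M 1 2 * M 2 1 = M' 1 2 * M' 2 1)
    (p13 : M 1 3 * M 3 1 = M' 1 3 * M' 3 1) (p23 : M 2 3 * M 3 2 = M' 2 3 * M' 3 2)
    (a b : Fin 4) (hnd : ([a, b] : List (Fin 4)).Nodup) :
    M a b * M b a = M' a b * M' b a := by
  fin_cases a <;> fin_cases b <;>
    first
    | exact absurd hnd (by decide)
    | (simp only [Fin.mk_zero, Fin.mk_one, Fin.reduceFinMk]
       first | linear_combination p01 | linear_combination p02 | linear_combination p03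
             | linear_combination p12 | linear_combination p13 | linear_combination p23)

private lemma cyc3 (M M' : Matrix (Fin 4) (Fin 4) ℝ)
    (h123 : M 0 1 * M 1 2 * M 2 0 = M' 0 1 * M' 1 2 * M' 2 0)
    (h124 : M 0 1 * M 1 3 * M 3 0 = M' 0 1 * M' 1 3 * M' 3 0)
    (h134 : M 0 2 * M 2 3 * M 3 0 = M' 0 2 * M' 2 3 * M' 3 0)
    (f123 : M 1 2 * M 2 3 * M 3 1 = M' 1 2 * M' 2 3 * M' 3 1)
    (r012 : M 0 2 * M 2 1 * M 1 0 = M' 0 2 * M' 2 1 * M' 1 0)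
    (r013 : M 0 3 * M 3 1 * M 1 0 = M' 0 3 * M' 3 1 * M' 1 0)
    (r023 : M 0 3 * M 3 2 * M 2 0 = M' 0 3 * M' 3 2 * M' 2 0)
    (r123 : M 1 3 * M 3 2 * M 2 1 = M' 1 3 * M' 3 2 * M' 2 1)
    (a b c : Fin 4) (hnd : ([a, b, c] : List (Fin 4)).Nodup) :
    M a b * M b c * M c a = M' a b * M' b c * M' c a := by
  fin_cases a <;> fin_cases b <;> fin_cases c <;>
    first
    | exact absurd hnd (by decide)
    | (simp only [Fin.mk_zero, Fin.mk_one, Fin.reduceFinMk]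
       first | linear_combination h123 | linear_combination h124 | linear_combination h134
             | linear_combination f123 | linear_combination r012 | linear_combination r013
             | linear_combination r023 | linear_combination r123)

private lemma cyc4 (M M' : Matrix (Fin 4) (Fin 4) ℝ)
    (q0123 : M 0 1 * M 1 2 * M 2 3 * M 3 0 = M' 0 1 * M' 1 2 * M' 2 3 * M' 3 0)
    (q0132 : M 0 1 * M 1 3 * M 3 2 * M 2 0 = M' 0 1 * M' 1 3 * M' 3 2 * M' 2 0)
    (q0213 : M 0 2 * M 2 1 * M 1 3 * M 3 0 = M' 0 2 * M' 2 1 * M' 1 3 * M' 3 0)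
    (q0321 : M 0 3 * M 3 2 * M 2 1 * M 1 0 = M' 0 3 * M' 3 2 * M' 2 1 * M' 1 0)
    (q0231 : M 0 2 * M 2 3 * M 3 1 * M 1 0 = M' 0 2 * M' 2 3 * M' 3 1 * M' 1 0)
    (q0312 : M 0 3 * M 3 1 * M 1 2 * M 2 0 = M' 0 3 * M' 3 1 * M' 1 2 * M' 2 0)
    (a b c d : Fin 4) (hnd : ([a, b, c, d] : List (Fin 4)).Nodup) :
    M a b * M b c * M c d * M d a = M' a b * M' b c * M' c d * M' d a := by
  fin_cases a <;> fin_cases b <;> fin_cases c <;> fin_cases d <;>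
    first
    | exact absurd hnd (by decide)
    | (simp only [Fin.mk_zero, Fin.mk_one, Fin.reduceFinMk]
       first | linear_combination q0123 | linear_combination q0132 | linear_combination q0213
             | linear_combination q0321 | linear_combination q0231 | linear_combination q0312)

/-- For 4×4 matrices with nonzero off-diagonal entries, the length-2 cyclic invariants together
with the three cyclic invariants `(1,2,3)`, `(1,2,4)`, `(1,3,4)` determine all cyclic
invariants: if they agree for `M` and `M'`, then for every list of at least two pairwise
distinct indices the cyclic products `M_{i₁i₂} M_{i₂i₃} ⋯ M_{i_k i₁}` agree. -/
theorem stmt_13 (M M' : Matrix (Fin 4) (Fin 4) ℝ)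
    (hne : ∀ i j, i ≠ j → M i j ≠ 0) (hne' : ∀ i j, i ≠ j → M' i j ≠ 0)
    (h2 : ∀ i j, i ≠ j → M i j * M j i = M' i j * M' j i)
    (h123 : M 0 1 * M 1 2 * M 2 0 = M' 0 1 * M' 1 2 * M' 2 0)
    (h124 : M 0 1 * M 1 3 * M 3 0 = M' 0 1 * M' 1 3 * M' 3 0)
    (h134 : M 0 2 * M 2 3 * M 3 0 = M' 0 2 * M' 2 3 * M' 3 0) :
    ∀ l : List (Fin 4), l.Nodup → 2 ≤ l.length →
      ((l.zip (l.rotate 1)).map (fun p => M p.1 p.2)).prod =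
        ((l.zip (l.rotate 1)).map (fun p => M' p.1 p.2)).prod := by
  have p01 := h2 0 1 (by decide)
  have p02 := h2 0 2 (by decide)
  have p03 := h2 0 3 (by decide)
  have p12 := h2 1 2 (by decide)
  have p13 := h2 1 3 (by decide)
  have p23 := h2 2 3 (by decide)
  -- reversed triangles containing 0
  have r012 : M 0 2 * M 2 1 * M 1 0 = M' 0 2 * M' 2 1 * M' 1 0 := by
    refine cancel3 (mul_ne_zero (mul_ne_zero (hne 0 1 (by decide)) (hne 1 2 (by decide)))
      (hne 2 0 (by decide))) ?_ h123
    linear_combination pm3 p01 p12 p02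
  have r013 : M 0 3 * M 3 1 * M 1 0 = M' 0 3 * M' 3 1 * M' 1 0 := by
    refine cancel3 (mul_ne_zero (mul_ne_zero (hne 0 1 (by decide)) (hne 1 3 (by decide)))
      (hne 3 0 (by decide))) ?_ h124
    linear_combination pm3 p01 p13 p03
  have r023 : M 0 3 * M 3 2 * M 2 0 = M' 0 3 * M' 3 2 * M' 2 0 := by
    refine cancel3 (mul_ne_zero (mul_ne_zero (hne 0 2 (by decide)) (hne 2 3 (by decide)))
      (hne 3 0 (by decide))) ?_ h134
    linear_combination pm3 p02 p23 p03
  -- the triangle (1,2,3)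
  have f123 : M 1 2 * M 2 3 * M 3 1 = M' 1 2 * M' 2 3 * M' 3 1 := by
    refine cancel3 (c := M 0 1 * M 1 3 * M 3 0 * (M 0 2 * M 2 0))
      (mul_ne_zero (mul_ne_zero (mul_ne_zero (hne 0 1 (by decide)) (hne 1 3 (by decide)))
        (hne 3 0 (by decide))) (mul_ne_zero (hne 0 2 (by decide)) (hne 2 0 (by decide)))) ?_
      (pm2 h124 p02)
    linear_combination pm3 h123 h134 p13
  have r123 : M 1 3 * M 3 2 * M 2 1 = M' 1 3 * M' 3 2 * M' 2 1 := by
    refine cancel3 (mul_ne_zero (mul_ne_zero (hne 1 2 (by decide)) (hne 2 3 (by decide)))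
      (hne 3 1 (by decide))) ?_ f123
    linear_combination pm3 p12 p23 p13
  -- the six 4-cycles
  have q0123 : M 0 1 * M 1 2 * M 2 3 * M 3 0 = M' 0 1 * M' 1 2 * M' 2 3 * M' 3 0 := by
    refine cancel3 (mul_ne_zero (hne 0 2 (by decide)) (hne 2 0 (by decide))) ?_ p02
    linear_combination pm2 h123 h134
  have q0132 : M 0 1 * M 1 3 * M 3 2 * M 2 0 = M' 0 1 * M' 1 3 * M' 3 2 * M' 2 0 := by
    refine cancel3 (mul_ne_zero (hne 0 3 (by decide)) (hne 3 0 (by decide))) ?_ p03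
    linear_combination pm2 h124 r023
  have q0213 : M 0 2 * M 2 1 * M 1 3 * M 3 0 = M' 0 2 * M' 2 1 * M' 1 3 * M' 3 0 := by
    refine cancel3 (mul_ne_zero (hne 0 1 (by decide)) (hne 1 0 (by decide))) ?_ p01
    linear_combination pm2 r012 h124
  have q0321 : M 0 3 * M 3 2 * M 2 1 * M 1 0 = M' 0 3 * M' 3 2 * M' 2 1 * M' 1 0 := by
    refine cancel3 (mul_ne_zero (hne 0 2 (by decide)) (hne 2 0 (by decide))) ?_ p02
    linear_combination pm2 r023 r012
  have q0231 : M 0 2 * M 2 3 * M 3 1 * M 1 0 = M' 0 2 * M' 2 3 * M' 3 1 * M' 1 0 := by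
    refine cancel3 (mul_ne_zero (hne 0 3 (by decide)) (hne 3 0 (by decide))) ?_ p03
    linear_combination pm2 h134 r013
  have q0312 : M 0 3 * M 3 1 * M 1 2 * M 2 0 = M' 0 3 * M' 3 1 * M' 1 2 * M' 2 0 := by
    refine cancel3 (mul_ne_zero (hne 0 1 (by decide)) (hne 1 0 (by decide))) ?_ p01
    linear_combination pm2 r013 h123
  intro l hnd hlen
  have hlen4 : l.length ≤ 4 := by simpa using hnd.length_le_card
  rcases l with _ | ⟨a, _ | ⟨b, _ | ⟨c, _ | ⟨d, _ | ⟨e, t⟩⟩⟩⟩⟩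
  · simp at hlen
  · simp at hlen
  · have e : ∀ N : Matrix (Fin 4) (Fin 4) ℝ,
        ((([a, b] : List (Fin 4)).zip (([a, b] : List (Fin 4)).rotate 1)).map
          (fun p => N p.1 p.2)).prod = N a b * N b a := by
      intro N; simp [List.rotate]
    rw [e, e]
    exact cyc2 M M' p01 p02 p03 p12 p13 p23 a b hnd
  · have e : ∀ N : Matrix (Fin 4) (Fin 4) ℝ,
        ((([a, b, c] : List (Fin 4)).zip (([a, b, c] : List (Fin 4)).rotate 1)).map
          (fun p => N p.1 p.2)).prod = N a b * N b c * N c a := by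
      intro N; simp [List.rotate]; try ring
    rw [e, e]
    exact cyc3 M M' h123 h124 h134 f123 r012 r013 r023 r123 a b c hnd
  · have e : ∀ N : Matrix (Fin 4) (Fin 4) ℝ,
        ((([a, b, c, d] : List (Fin 4)).zip (([a, b, c, d] : List (Fin 4)).rotate 1)).map
          (fun p => N p.1 p.2)).prod = N a b * N b c * N c d * N d a := by
      intro N; simp [List.rotate]; try ring
    rw [e, e]
    exact cyc4 M M' q0123 q0132 q0213 q0321 q0231 q0312 a b c d hnd
  · simp at hlen4; omega
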